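/- Let s ≥ 2 be a natural number and let H ∈ k⟦X⟧ have constant coefficient 0 and coefficient of X equal to 1. Then for every c ∈ k with c ≠ 0 there exist unique c₂, …, c_s ∈ k such that the power series Φ = c·X + Σ_{n=2}^{s} c_n X^n satisfies H∘Φ ≡ Φ′·H mod X^{s+1}. -/

import Mathlib

open PowerSeries

variable {k : Type*} [Field k] [CharZero k]

/-- Substitution of `g` (with zero constant coefficient) into `f`. -/
noncomputable def comp (f g : PowerSeries k) : PowerSeries k :=
  PowerSeries.mk fun m => ∑ n ∈ Finset.range (m + 1),
    PowerSeries.coeff n f * PowerSeries.coeff m (g ^ n)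

set_option linter.unusedSectionVars false
set_option linter.unusedVariables false
set_option maxHeartbeats 1000000

lemma coeff_derivativeFun' (f : PowerSeries k) (n : ℕ) :
    coeff n (derivativeFun f) = coeff (n + 1) f * (n + 1) :=
  coeff_derivative f n

lemma coeff_comp (f g : PowerSeries k) (m : ℕ) :
    coeff m (comp f g) = ∑ n ∈ Finset.range (m + 1),
      coeff n f * coeff m (g ^ n) :=
  coeff_mk _ _

lemma dvd_comp_sub (f : PowerSeries k) {Φ Ψ : PowerSeries k} {M : ℕ}
    (h : (X : PowerSeries k) ^ M ∣ Φ - Ψ) :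
    (X : PowerSeries k) ^ M ∣ comp f Φ - comp f Ψ := by
  rw [X_pow_dvd_iff]
  intro m hm
  rw [map_sub, coeff_comp, coeff_comp, ← Finset.sum_sub_distrib]
  apply Finset.sum_eq_zero
  intro n _
  rw [← mul_sub, ← map_sub]
  have : (X : PowerSeries k) ^ M ∣ Φ ^ n - Ψ ^ n :=
    h.trans (sub_dvd_pow_sub_pow Φ Ψ n)
  rw [X_pow_dvd_iff] at this
  rw [this m hm, mul_zero]

lemma dvd_deriv_mul_sub {H : PowerSeries k} (hH0 : constantCoeff H = 0)
    {Φ Ψ : PowerSeries k} {M : ℕ}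
    (h : (X : PowerSeries k) ^ (M + 1) ∣ Φ - Ψ) :
    (X : PowerSeries k) ^ (M + 1) ∣ derivativeFun Φ * H - derivativeFun Ψ * H := by
  rw [X_pow_dvd_iff] at h ⊢
  intro m hm
  rw [← sub_mul, coeff_mul]
  apply Finset.sum_eq_zero
  intro p hp
  rw [Finset.HasAntidiagonal.mem_antidiagonal] at hp
  rcases Nat.eq_zero_or_pos p.2 with h2 | h2
  · rw [h2, coeff_zero_eq_constantCoeff, hH0, mul_zero]
  · have hlt : p.1 + 1 < M + 1 := by omega
    rw [map_sub, coeff_derivativeFun', coeff_derivativeFun', ← sub_mul, ← map_sub,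
      h _ hlt, zero_mul, zero_mul]

lemma mulX_dvd_pow_sub_pow {Φ Ψ : PowerSeries k} (h0 : constantCoeff Φ = 0)
    (h0' : constantCoeff Ψ = 0) {n : ℕ} (hn : 2 ≤ n) :
    (Φ - Ψ) * X ∣ Φ ^ n - Ψ ^ n := by
  rw [← geom_sum₂_mul Φ Ψ n, mul_comm (Φ - Ψ) X]
  apply mul_dvd_mul _ dvd_rfl
  rw [X_dvd_iff, map_sum]
  apply Finset.sum_eq_zero
  intro i hi
  rw [Finset.mem_range] at hi
  rw [map_mul, map_pow, map_pow, h0, h0']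
  rcases Nat.eq_zero_or_pos i with h | h
  · rw [h, zero_pow (by omega : n - 1 - 0 ≠ 0), mul_zero]
  · rw [zero_pow (by omega : i ≠ 0), zero_mul]

lemma deriv_C_mul_X_pow (a : k) (m : ℕ) (hm : 1 ≤ m) :
    derivativeFun (C a * X ^ m : PowerSeries k) = C (a * m) * X ^ (m - 1) := by
  ext j
  rw [coeff_derivativeFun', coeff_C_mul, coeff_C_mul, coeff_X_pow, coeff_X_pow]
  by_cases h : j + 1 = m
  · rw [if_pos h, if_pos (by omega), mul_one, mul_one, ← h]
    push_cast
    ring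
  · rw [if_neg h, if_neg (by omega)]
    simp

lemma coeff_shift {H : PowerSeries k} (hH0 : constantCoeff H = 0)
    (hH1 : coeff 1 H = 1) {Φ : PowerSeries k} (h0 : constantCoeff Φ = 0)
    {m : ℕ} (hm : 1 ≤ m) (a : k) :
    coeff m (comp H (Φ + C a * X ^ m)
        - derivativeFun (Φ + C a * X ^ m) * H)
      = coeff m (comp H Φ - derivativeFun Φ * H) + a * (1 - m) := by
  have hD0 : constantCoeff (C a * X ^ m : PowerSeries k) = 0 := by
    rw [map_mul, map_pow, constantCoeff_X, zero_pow (by omega : m ≠ 0), mul_zero]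
  have hΦD0 : constantCoeff (Φ + C a * X ^ m) = 0 := by
    rw [map_add, h0, hD0, add_zero]
  have hcomp : coeff m (comp H (Φ + C a * X ^ m)) = coeff m (comp H Φ) + a := by
    rw [coeff_comp, coeff_comp]
    have key : ∀ n ∈ Finset.range (m + 1),
        coeff n H * coeff m ((Φ + C a * X ^ m) ^ n)
          = coeff n H * coeff m (Φ ^ n)
            + (if n = 1 then a else 0) := by
      intro n hn
      rcases Nat.lt_or_ge n 2 with h2 | h2
      · interval_cases n
        · simp
        · rw [if_pos rfl, pow_one, pow_one, map_add, hH1, one_mul, one_mul,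
            coeff_C_mul, coeff_X_pow, if_pos rfl, mul_one]
      · rw [if_neg (by omega), add_zero]
        congr 1
        have hdvd : ((Φ + C a * X ^ m) - Φ) * X ∣
            (Φ + C a * X ^ m) ^ n - Φ ^ n := mulX_dvd_pow_sub_pow hΦD0 h0 h2
        have hdvd2 : (X : PowerSeries k) ^ (m + 1) ∣
            (Φ + C a * X ^ m) ^ n - Φ ^ n := by
          refine dvd_trans ?_ hdvd
          rw [add_sub_cancel_left, pow_succ]
          exact mul_dvd_mul ⟨C a, mul_comm _ _⟩ dvd_rfl
        rw [X_pow_dvd_iff] at hdvd2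
        have := hdvd2 m (by omega)
        rw [map_sub, sub_eq_zero] at this
        exact this
    rw [Finset.sum_congr rfl key, Finset.sum_add_distrib,
      Finset.sum_ite_eq' (Finset.range (m + 1)) 1 (fun _ => a),
      if_pos (Finset.mem_range.mpr (by omega))]
  have hder : coeff m (derivativeFun (Φ + C a * X ^ m) * H)
      = coeff m (derivativeFun Φ * H) + a * m := by
    rw [derivativeFun_add, add_mul, map_add]
    congr 1
    rw [deriv_C_mul_X_pow a m hm, mul_assoc, coeff_C_mul,
      coeff_X_pow_mul', if_pos (by omega : m - 1 ≤ m)]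
    have hm' : m - (m - 1) = 1 := by omega
    rw [hm', hH1, mul_one]
  rw [map_sub, map_sub, hcomp, hder]
  ring

lemma aj_main (H : PowerSeries k) (hH0 : constantCoeff H = 0)
    (hH1 : coeff 1 H = 1) (c : k) :
    ∀ s : ℕ, 1 ≤ s → ∃! Φ : PowerSeries k,
      constantCoeff Φ = 0 ∧ coeff 1 Φ = c ∧
      (∀ n, s < n → coeff n Φ = 0) ∧
      (X : PowerSeries k) ^ (s + 1) ∣ comp H Φ - derivativeFun Φ * H := by
  intro s
  induction s with
  | zero => omega
  | succ s ih =>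
    intro _
    rcases Nat.eq_zero_or_pos s with rfl | hs
    · -- base case: s + 1 = 1
      refine ⟨C c * X, ⟨by simp, by simp, ?_, ?_⟩, ?_⟩
      · intro n hn
        rw [coeff_C_mul, coeff_X, if_neg (by omega), mul_zero]
      · have hD : derivativeFun (C c * X : PowerSeries k) = C c := by
          have := deriv_C_mul_X_pow c 1 le_rfl
          simpa using this
        rw [hD, X_pow_dvd_iff]
        intro m hm
        interval_cases m
        · rw [map_sub, coeff_comp]
          simp [hH0]
        · rw [map_sub, coeff_comp, Finset.sum_range_succ, Finset.sum_range_one]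
          simp [hH0, hH1]
      · rintro Ψ ⟨h0, h1, hhi, -⟩
        ext n
        rw [coeff_C_mul, coeff_X]
        rcases Nat.lt_or_ge n 2 with h | h
        · interval_cases n
          · simpa using h0
          · simpa using h1
        · rw [if_neg (by omega), mul_zero]
          exact hhi n (by omega)
    · obtain ⟨Φ₀, ⟨hc0, hc1, hhi, hdvd⟩, huniq⟩ := ih hs
      set E := coeff (s + 1) (comp H Φ₀ - derivativeFun Φ₀ * H) with hE
      have hsk : (s : k) ≠ 0 := Nat.cast_ne_zero.mpr (by omega)
      set a := E / s with ha
      have key : ∀ b : k,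
          coeff (s + 1) (comp H (Φ₀ + C b * X ^ (s + 1))
            - derivativeFun (Φ₀ + C b * X ^ (s + 1)) * H) = E - b * s := by
        intro b
        rw [coeff_shift hH0 hH1 hc0 (by omega) b, ← hE]
        push_cast
        ring
      have hlow : ∀ b : k, (X : PowerSeries k) ^ (s + 1) ∣
          comp H (Φ₀ + C b * X ^ (s + 1))
            - derivativeFun (Φ₀ + C b * X ^ (s + 1)) * H := by
        intro b
        have hd : (X : PowerSeries k) ^ (s + 1) ∣ (Φ₀ + C b * X ^ (s + 1)) - Φ₀ := by
          rw [add_sub_cancel_left]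
          exact ⟨C b, mul_comm _ _⟩
        have h1 := dvd_comp_sub H hd
        have h2 := dvd_deriv_mul_sub hH0 (M := s) hd
        have hsplit : comp H (Φ₀ + C b * X ^ (s + 1))
            - derivativeFun (Φ₀ + C b * X ^ (s + 1)) * H
            = (comp H Φ₀ - derivativeFun Φ₀ * H)
              + (comp H (Φ₀ + C b * X ^ (s + 1)) - comp H Φ₀)
              - (derivativeFun (Φ₀ + C b * X ^ (s + 1)) * H
                  - derivativeFun Φ₀ * H) := by ring
        rw [hsplit]
        exact dvd_sub (dvd_add hdvd h1) h2
      refine ⟨Φ₀ + C a * X ^ (s + 1), ⟨?_, ?_, ?_, ?_⟩, ?_⟩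
      · rw [map_add, hc0, map_mul, map_pow, constantCoeff_X,
          zero_pow (by omega : s + 1 ≠ 0), mul_zero, add_zero]
      · rw [map_add, hc1, coeff_C_mul, coeff_X_pow, if_neg (by omega), mul_zero, add_zero]
      · intro n hn
        rw [map_add, hhi n (by omega), coeff_C_mul, coeff_X_pow,
          if_neg (by omega), mul_zero, add_zero]
      · rw [X_pow_dvd_iff]
        intro m hm
        rcases Nat.lt_or_ge m (s + 1) with h | h
        · have := hlow a
          rw [X_pow_dvd_iff] at this
          exact this m h
        · have hm' : m = s + 1 := by omega
          rw [hm', key a, ha, div_mul_cancel₀ E hsk, sub_self]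
      · rintro Ψ ⟨g0, g1, ghi, gdvd⟩
        set b := coeff (s + 1) Ψ with hb
        set Ψ₀ := Ψ - C b * X ^ (s + 1) with hΨ₀
        have hΨ : Ψ = Ψ₀ + C b * X ^ (s + 1) := by
          rw [hΨ₀, sub_add_cancel]
        have hsol : Ψ₀ = Φ₀ := by
          apply huniq
          refine ⟨?_, ?_, ?_, ?_⟩
          · rw [hΨ₀, map_sub, g0, map_mul, map_pow, constantCoeff_X,
              zero_pow (by omega : s + 1 ≠ 0), mul_zero, sub_zero]
          · rw [hΨ₀, map_sub, g1, coeff_C_mul, coeff_X_pow, if_neg (by omega),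
              mul_zero, sub_zero]
          · intro n hn
            rcases Nat.lt_or_ge n (s + 2) with h | h
            · have hn' : n = s + 1 := by omega
              rw [hΨ₀, map_sub, hn', coeff_C_mul, coeff_X_pow, if_pos rfl,
                mul_one, ← hb, sub_self]
            · rw [hΨ₀, map_sub, ghi n (by omega), coeff_C_mul, coeff_X_pow,
                if_neg (by omega), mul_zero, sub_zero]
          · have hd : (X : PowerSeries k) ^ (s + 1) ∣ Ψ₀ - Ψ := by
              rw [hΨ₀, sub_sub_cancel_left]
              exact Dvd.dvd.neg_right ⟨C b, mul_comm _ _⟩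
            have h1 := dvd_comp_sub H hd
            have h2 := dvd_deriv_mul_sub hH0 (M := s) hd
            have h3 : (X : PowerSeries k) ^ (s + 1) ∣
                comp H Ψ - derivativeFun Ψ * H :=
              dvd_trans (pow_dvd_pow X (by omega)) gdvd
            have hsplit : comp H Ψ₀ - derivativeFun Ψ₀ * H
                = (comp H Ψ - derivativeFun Ψ * H)
                  + (comp H Ψ₀ - comp H Ψ)
                  - (derivativeFun Ψ₀ * H - derivativeFun Ψ * H) := by ring
            rw [hsplit]
            exact dvd_sub (dvd_add h3 h1) h2
        have hcoeff : coeff (s + 1) (comp H Ψ - derivativeFun Ψ * H) = 0 := by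
          rw [X_pow_dvd_iff] at gdvd
          exact gdvd (s + 1) (by omega)
        rw [hΨ, hsol] at hcoeff
        rw [key b] at hcoeff
        have hba : b = a := by
          rw [ha, eq_div_iff hsk]
          linear_combination -hcoeff
        rw [hΨ, hsol, hba]

/-- For a generator `H = X + Σ h_i X^i` and every `c ≠ 0` there are unique
coefficients `c₂, …, c_s` such that `Φ = cX + Σ_{n=2}^s c_n X^n` solves the
Aczél–Jabotinsky equation mod `X^(s+1)`. -/
theorem aczel_jabotinsky_truncated_unique_solution (H : PowerSeries k)
    (hH0 : constantCoeff H = 0) (hH1 : coeff 1 H = 1)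
    (s : ℕ) (hs : 2 ≤ s) (c : k) (hc : c ≠ 0) :
    ∃! Φ : PowerSeries k,
      constantCoeff Φ = 0 ∧ coeff 1 Φ = c ∧
      (∀ n, s < n → coeff n Φ = 0) ∧
      (X : PowerSeries k) ^ (s + 1) ∣ comp H Φ - derivativeFun Φ * H :=
  aj_main H hH0 hH1 c s (by omega)
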